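/- Let k be an algebraically closed field of characteristic 0. The 2-dimensional subspace L = span{E₁₂ + E₂₃, E₂₁ - E₃₂} of sl₃(k) consists entirely of nilpotent matrices, but is not triangularizable: there is no invertible 3×3 matrix P such that P L P⁻¹ consists of strictly upper triangular matrices. -/

import Mathlib

set_option maxHeartbeats 1600000
set_option synthInstance.maxHeartbeats 400000

open Matrix

/-- Over an algebraically closed field `k` of characteristic 0, the
2-dimensional subspace `L = span{E₁₂ + E₂₃, E₂₁ - E₃₂}` of `sl₃(k)` consists of nilpotent
matrices, but no conjugate `P L P⁻¹` of `L` consists of strictly upper triangular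
matrices. -/
theorem stmt_15 (k : Type*) [Field k] [IsAlgClosed k] [CharZero k] :
    (∀ M ∈ Submodule.span k
        ({single 0 1 (1 : k) + single 1 2 1,
          single 1 0 (1 : k) - single 2 1 1} :
          Set (Matrix (Fin 3) (Fin 3) k)), IsNilpotent M) ∧
    ¬ ∃ P : GL (Fin 3) k, ∀ M ∈ Submodule.span k
        ({single 0 1 (1 : k) + single 1 2 1,
          single 1 0 (1 : k) - single 2 1 1} :
          Set (Matrix (Fin 3) (Fin 3) k)),
        ∀ i j : Fin 3, j ≤ i → ((P : Matrix (Fin 3) (Fin 3) k) * M * (↑P⁻¹ : Matrix (Fin 3) (Fin 3) k)) i j = 0 := by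
  set A : Matrix (Fin 3) (Fin 3) k := single 0 1 (1 : k) + single 1 2 1 with hAdef
  set B : Matrix (Fin 3) (Fin 3) k := single 1 0 (1 : k) - single 2 1 1 with hBdef
  constructor
  · intro M hM
    rw [Submodule.mem_span_pair] at hM
    obtain ⟨a, b, rfl⟩ := hM
    have hM : a • A + b • B = !![0, a, 0; b, 0, a; 0, -b, 0] := by
      ext i j
      fin_cases i <;> fin_cases j <;>
        simp [hAdef, hBdef, Matrix.single, Matrix.smul_apply, Matrix.add_apply,
          Matrix.sub_apply, Matrix.of_apply]
    refine ⟨3, ?_⟩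
    rw [hM, pow_succ, pow_succ, pow_one, Matrix.mul_fin_three, Matrix.mul_fin_three]
    ext i j
    fin_cases i <;> fin_cases j <;> simp [-mul_eq_zero] <;> ring
  · rintro ⟨P, h⟩
    have hA : A ∈ Submodule.span k ({A, B} : Set (Matrix (Fin 3) (Fin 3) k)) :=
      Submodule.subset_span (Set.mem_insert _ _)
    have hB : B ∈ Submodule.span k ({A, B} : Set (Matrix (Fin 3) (Fin 3) k)) :=
      Submodule.subset_span (Set.mem_insert_of_mem _ rfl)
    set NA : Matrix (Fin 3) (Fin 3) k := (↑P : Matrix (Fin 3) (Fin 3) k) * A * (↑P⁻¹ : Matrix (Fin 3) (Fin 3) k) with hNAdef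
    have hNA : ∀ i j : Fin 3, j ≤ i → NA i j = 0 := h A hA
    set NB : Matrix (Fin 3) (Fin 3) k := (↑P : Matrix (Fin 3) (Fin 3) k) * B * (↑P⁻¹ : Matrix (Fin 3) (Fin 3) k) with hNBdef
    have hNB : ∀ i j : Fin 3, j ≤ i → NB i j = 0 := h B hB
    -- product of strictly upper triangulars is strictly upper triangular
    have mulzero : ∀ (X Y : Matrix (Fin 3) (Fin 3) k),
        (∀ i j : Fin 3, j ≤ i → X i j = 0) → (∀ i j : Fin 3, j ≤ i → Y i j = 0) →
        ∀ i j : Fin 3, j ≤ i → (X * Y) i j = 0 := by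
      intro X Y hX hY i j hij
      rw [Matrix.mul_apply]
      apply Finset.sum_eq_zero
      intro l _
      rcases le_or_gt l i with hl | hl
      · rw [hX i l hl, zero_mul]
      · rw [hY l j (hij.trans hl.le), mul_zero]
    set C : Matrix (Fin 3) (Fin 3) k := NA * NB - NB * NA with hCdef
    have hC : ∀ i : Fin 3, C i 0 = 0 := by
      intro i
      have h1 := mulzero NA NB hNA hNB i 0 (Fin.zero_le i)
      have h2 := mulzero NB NA hNB hNA i 0 (Fin.zero_le i)
      simp [hCdef, Matrix.sub_apply, h1, h2]
    have hdet0 : C.det = 0 := Matrix.det_eq_zero_of_column_eq_zero 0 hC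
    have hinv : (↑P⁻¹ : Matrix (Fin 3) (Fin 3) k) * (↑P : Matrix (Fin 3) (Fin 3) k) = 1 := P.inv_mul
    have h1 : ∀ Z : Matrix (Fin 3) (Fin 3) k,
        (↑P⁻¹ : Matrix (Fin 3) (Fin 3) k) * ((↑P : Matrix (Fin 3) (Fin 3) k) * Z) = Z := by
      intro Z; rw [← mul_assoc, hinv, one_mul]
    have conj : ∀ X Y : Matrix (Fin 3) (Fin 3) k,
        ((↑P : Matrix (Fin 3) (Fin 3) k) * X * (↑P⁻¹ : Matrix (Fin 3) (Fin 3) k)) *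
          ((↑P : Matrix (Fin 3) (Fin 3) k) * Y * (↑P⁻¹ : Matrix (Fin 3) (Fin 3) k)) =
        (↑P : Matrix (Fin 3) (Fin 3) k) * (X * Y) * (↑P⁻¹ : Matrix (Fin 3) (Fin 3) k) := by
      intro X Y
      simp only [mul_assoc, h1]
    have key : C = (↑P : Matrix (Fin 3) (Fin 3) k) * (A * B - B * A) * (↑P⁻¹ : Matrix (Fin 3) (Fin 3) k) := by
      rw [hCdef, hNAdef, hNBdef, conj, conj, ← sub_mul, ← mul_sub]
    have hD : A * B - B * A = Matrix.diagonal ![1, -2, 1] := by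
      ext i j
      fin_cases i <;> fin_cases j <;>
        simp [hAdef, hBdef, Matrix.mul_apply, Fin.sum_univ_three, Matrix.single,
          Matrix.sub_apply, Matrix.add_apply, Matrix.diagonal] <;> norm_num
    have hdet : (A * B - B * A).det = -2 := by
      rw [hD, Matrix.det_diagonal]
      norm_num [Fin.prod_univ_three]
      rfl
    rw [key, Matrix.det_mul, Matrix.det_mul, hdet] at hdet0
    have hPP : (↑P : Matrix (Fin 3) (Fin 3) k).det * (↑P⁻¹ : Matrix (Fin 3) (Fin 3) k).det = 1 := by
      rw [← Matrix.det_mul, P.mul_inv, Matrix.det_one]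
    have h2 : (-2 : k) * ((↑P : Matrix (Fin 3) (Fin 3) k).det * (↑P⁻¹ : Matrix (Fin 3) (Fin 3) k).det) = 0 := by
      linear_combination hdet0
    rw [hPP, mul_one] at h2
    norm_num at h2
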